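/- Let w ≥ 1, h ≥ 1 be integers, p > 6, and define f(w₁,h,w₂) = (1/2) W(L⁺_h, Q_{w₁,h,w₂}) where L⁺_h = {(x,y) ∈ ℤ² : -h ≤ x < 0, y > 0}, Q_{w₁,h,w₂} = {(x,y) ∈ ℤ² : (x < -w₁-h or x ≥ w₂), y ≤ 0}, and W(A,B) = 4 Σ_{x∈A} Σ_{y∈B} |x-y|^{-p}. Then f(w₁,h,w₂) ≤ C₂(w₁^{4-p} + w₂^{4-p}) for a constant C₂ depending only on p, uniformly in h. -/

import Mathlib

/-- Euclidean norm of a point of `ℤ²`. -/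
noncomputable def zNorm (x : ℤ × ℤ) : ℝ := Real.sqrt ((x.1 : ℝ) ^ 2 + (x.2 : ℝ) ^ 2)

open scoped ENNReal

private lemma bstep {s x : ℝ} (hs : 2 ≤ s) (hx : 1 ≤ x) :
    (s - 1) * (x + 1) ^ (-s) ≤ x ^ (1 - s) - (x + 1) ^ (1 - s) := by
  have hx0 : 0 < x := by linarith
  have hx1 : 0 < x + 1 := by linarith
  have hr : (1:ℝ) ≤ s - 1 := by linarith
  have hb : 1 + (s-1) * (1/x) ≤ (1 + 1/x) ^ (s-1) :=
    one_add_mul_self_le_rpow_one_add (by have := one_div_pos.mpr hx0; linarith) hr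
  have key : (x+1) ^ (1-s) * (1 + 1/x) ^ (s-1) = x ^ (1-s) := by
    have e1 : (1 : ℝ) + 1/x = (x+1)/x := by field_simp
    rw [e1, Real.div_rpow (by linarith) (le_of_lt hx0)]
    rw [show ((x+1) ^ (1-s) * ((x+1) ^ (s-1) / x ^ (s-1))) =
      ((x+1) ^ (1-s) * (x+1) ^ (s-1)) / x ^ (s-1) from by ring,
      ← Real.rpow_add hx1]
    norm_num
    rw [show (1:ℝ) - s = -(s-1) from by ring, Real.rpow_neg (le_of_lt hx0)]
  have hpos : (0:ℝ) ≤ (x+1) ^ (1-s) := Real.rpow_nonneg (by linarith) _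
  have step1 : x ^ (1-s) - (x+1) ^ (1-s) = (x+1) ^ (1-s) * ((1 + 1/x) ^ (s-1) - 1) := by
    rw [mul_sub, key]; ring
  have step2 : (x+1) ^ (1-s) * ((1 + 1/x) ^ (s-1) - 1)
      ≥ (x+1) ^ (1-s) * ((s-1) * (1/x)) := by
    apply mul_le_mul_of_nonneg_left _ hpos
    linarith
  have step3 : (x+1) ^ (1-s) * ((s-1) * (1/x))
      ≥ (x+1) ^ (1-s) * ((s-1) * (1/(x+1))) := by
    apply mul_le_mul_of_nonneg_left _ hpos
    have : 1/(x+1) ≤ 1/x := by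
      apply one_div_le_one_div_of_le hx0; linarith
    nlinarith
  have step4 : (x+1) ^ (1-s) * ((s-1) * (1/(x+1))) = (s-1) * (x+1) ^ (-s) := by
    rw [show (1:ℝ) - s = (-s) + 1 from by ring, Real.rpow_add hx1, Real.rpow_one]
    field_simp
  linarith

private lemma tail_sum_real {s m : ℝ} (hs : 2 ≤ s) (hm : 1 ≤ m) :
    Summable (fun k : ℕ => (m + 1 + (k:ℝ)) ^ (-s)) ∧
    ∑' k : ℕ, (m + 1 + (k:ℝ)) ^ (-s) ≤ m ^ (1 - s) / (s - 1) := by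
  have hs1 : (0:ℝ) < s - 1 := by linarith
  have hnn : ∀ k : ℕ, 0 ≤ (m + 1 + (k:ℝ)) ^ (-s) := by
    intro k
    apply Real.rpow_nonneg
    have := Nat.cast_nonneg (α := ℝ) k
    linarith
  have hpart : ∀ n : ℕ, ∑ k ∈ Finset.range n, (m + 1 + (k:ℝ)) ^ (-s) ≤ m ^ (1-s) / (s-1) := by
    intro n
    have tele : ∑ k ∈ Finset.range n,
        ((m+(k:ℝ))^(1-s) - (m+((k:ℝ)+1))^(1-s)) = m^(1-s) - (m+(n:ℝ))^(1-s) := by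
      have h := Finset.sum_range_sub' (fun k : ℕ => (m+(k:ℝ))^(1-s)) n
      simp only [Nat.cast_add, Nat.cast_one, Nat.cast_zero, add_zero] at h
      rw [← h]
    have hterm : ∀ k : ℕ, (m + 1 + (k:ℝ))^(-s)
        ≤ ((m+(k:ℝ))^(1-s) - (m+((k:ℝ)+1))^(1-s))/(s-1) := by
      intro k
      have hk : (1:ℝ) ≤ m + (k:ℝ) := by
        have := Nat.cast_nonneg (α := ℝ) k; linarith
      have hb := bstep hs hk
      rw [le_div_iff₀ hs1, show m + 1 + (k:ℝ) = m + (k:ℝ) + 1 from by ring]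
      rw [show m + ((k:ℝ)+1) = m + (k:ℝ) + 1 from by ring]
      linarith
    calc ∑ k ∈ Finset.range n, (m + 1 + (k:ℝ)) ^ (-s)
        ≤ ∑ k ∈ Finset.range n, ((m+(k:ℝ))^(1-s) - (m+((k:ℝ)+1))^(1-s))/(s-1) :=
          Finset.sum_le_sum (fun k _ => hterm k)
      _ = (m^(1-s) - (m+(n:ℝ))^(1-s))/(s-1) := by rw [← Finset.sum_div, tele]
      _ ≤ m^(1-s)/(s-1) := by
          have h0 : (0:ℝ) ≤ (m+(n:ℝ))^(1-s) := by
            apply Real.rpow_nonneg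
            have := Nat.cast_nonneg (α := ℝ) n; linarith
          exact (div_le_div_iff_of_pos_right hs1).mpr (by linarith)
  have hsum := summable_of_sum_range_le hnn hpart
  exact ⟨hsum, Summable.tsum_le_of_sum_range_le hsum hpart⟩

private lemma tail_sum {s m : ℝ} (hs : 2 ≤ s) (hm : 1 ≤ m) :
    ∑' k : ℕ, ENNReal.ofReal ((m + 1 + (k:ℝ)) ^ (-s))
      ≤ ENNReal.ofReal (m ^ (1 - s) / (s - 1)) := by
  obtain ⟨hsum, hle⟩ := tail_sum_real hs hm
  have hnn : ∀ k : ℕ, 0 ≤ (m + 1 + (k:ℝ)) ^ (-s) := by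
    intro k
    apply Real.rpow_nonneg
    have := Nat.cast_nonneg (α := ℝ) k
    linarith
  rw [← ENNReal.ofReal_tsum_of_nonneg hnn hsum]
  exact ENNReal.ofReal_le_ofReal hle

private lemma tsum_ite_nat (c : ℝ≥0∞) (n : ℕ) :
    ∑' v : ℕ, (if v ≤ n then c else 0) = ((n:ℝ≥0∞) + 1) * c := by
  rw [tsum_eq_sum (s := Finset.range (n+1))
    (by intro b hb; simp only [Finset.mem_range] at hb; rw [if_neg]; omega)]
  rw [Finset.sum_congr rfl (fun v hv => if_pos (by simp only [Finset.mem_range] at hv; omega))]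
  rw [Finset.sum_const, Finset.card_range, nsmul_eq_mul]
  push_cast
  ring

private lemma quad_sum (p : ℝ) (hp : 6 < p) (w : ℕ) (hw : 1 ≤ w) :
    ∑' t : ℕ × ℕ × ℕ × ℕ,
      (if t.2.1 ≤ t.1 ∧ t.2.2.2 ≤ t.2.2.1 then
        ENNReal.ofReal (((w:ℝ) + 2 + t.1 + t.2.2.1) ^ (-p)) else 0)
      ≤ ENNReal.ofReal ((w:ℝ) ^ (4 - p) / ((p - 3) * (p - 4))) := by
  have hw1 : (1:ℝ) ≤ (w:ℝ) := by exact_mod_cast hw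
  set c : ℕ → ℕ → ℝ≥0∞ := fun i j => ENNReal.ofReal (((w:ℝ) + 2 + i + j) ^ (-p)) with hc
  have step1 : ∑' t : ℕ × ℕ × ℕ × ℕ,
      (if t.2.1 ≤ t.1 ∧ t.2.2.2 ≤ t.2.2.1 then
        ENNReal.ofReal (((w:ℝ) + 2 + t.1 + t.2.2.1) ^ (-p)) else 0)
      = ∑' i : ℕ, ∑' j : ℕ, ((i:ℝ≥0∞)+1) * (((j:ℝ≥0∞)+1) * c i j) := by
    rw [ENNReal.tsum_prod']
    apply tsum_congr; intro i
    rw [ENNReal.tsum_prod']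
    have inner : ∀ u : ℕ, (∑' r : ℕ × ℕ, (if u ≤ i ∧ r.2 ≤ r.1 then
        ENNReal.ofReal (((w:ℝ) + 2 + i + r.1) ^ (-p)) else 0))
        = if u ≤ i then (∑' j : ℕ, ((j:ℝ≥0∞)+1) * c i j) else 0 := by
      intro u
      by_cases hui : u ≤ i
      · simp only [hui, true_and, if_true]
        rw [ENNReal.tsum_prod']
        apply tsum_congr; intro j
        rw [← tsum_ite_nat (c i j) j]
      · simp [hui]
    calc ∑' (u : ℕ) (r : ℕ × ℕ), (if u ≤ i ∧ r.2 ≤ r.1 then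
          ENNReal.ofReal (((w:ℝ) + 2 + i + r.1) ^ (-p)) else 0)
        = ∑' u : ℕ, (if u ≤ i then (∑' j : ℕ, ((j:ℝ≥0∞)+1) * c i j) else 0) :=
          tsum_congr inner
      _ = ((i:ℝ≥0∞)+1) * ∑' j : ℕ, ((j:ℝ≥0∞)+1) * c i j := tsum_ite_nat _ i
      _ = ∑' j : ℕ, ((i:ℝ≥0∞)+1) * (((j:ℝ≥0∞)+1) * c i j) := (ENNReal.tsum_mul_left).symm
  rw [step1]
  have term_le : ∀ i j : ℕ, ((i:ℝ≥0∞)+1) * (((j:ℝ≥0∞)+1) * c i j)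
      ≤ ENNReal.ofReal ((((w:ℝ) + 1 + i) + 1 + j) ^ (-(p-2))) := by
    intro i j
    have hi : ((i:ℝ≥0∞)+1) = ENNReal.ofReal ((i:ℝ)+1) := by
      rw [ENNReal.ofReal_add (by positivity) (by norm_num)]
      simp
    have hj : ((j:ℝ≥0∞)+1) = ENNReal.ofReal ((j:ℝ)+1) := by
      rw [ENNReal.ofReal_add (by positivity) (by norm_num)]
      simp
    rw [hc, hi, hj, ← ENNReal.ofReal_mul (by positivity), ← ENNReal.ofReal_mul (by positivity)]
    apply ENNReal.ofReal_le_ofReal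
    have hin : (0:ℝ) ≤ (i:ℝ) := Nat.cast_nonneg i
    have hjn : (0:ℝ) ≤ (j:ℝ) := Nat.cast_nonneg j
    set n : ℝ := (w:ℝ) + 2 + i + j with hn
    have hnpos : (0:ℝ) < n := by rw [hn]; linarith
    have hbase : ((w:ℝ) + 1 + i) + 1 + j = n := by rw [hn]; ring
    rw [hbase]
    have hsplit : n ^ (-(p-2)) = n^(2:ℝ) * n ^ (-p) := by
      rw [← Real.rpow_add hnpos]; ring_nf
    rw [hsplit, show n^(2:ℝ) = n * n from by
      rw [show (2:ℝ) = ((2:ℕ):ℝ) from by norm_num, Real.rpow_natCast]; ring]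
    have hpow : (0:ℝ) ≤ n ^ (-p) := Real.rpow_nonneg (le_of_lt hnpos) _
    have h1 : (i:ℝ) + 1 ≤ n := by rw [hn]; linarith
    have h2 : (j:ℝ) + 1 ≤ n := by rw [hn]; linarith
    have h3 : ((i:ℝ)+1)*((j:ℝ)+1) ≤ n*n := mul_le_mul h1 h2 (by linarith) (by linarith)
    rw [← mul_assoc]
    exact mul_le_mul_of_nonneg_right h3 hpow
  calc ∑' i : ℕ, ∑' j : ℕ, ((i:ℝ≥0∞)+1) * (((j:ℝ≥0∞)+1) * c i j)
      ≤ ∑' i : ℕ, ∑' j : ℕ, ENNReal.ofReal ((((w:ℝ) + 1 + i) + 1 + j) ^ (-(p-2))) :=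
        ENNReal.tsum_le_tsum (fun i => ENNReal.tsum_le_tsum (fun j => term_le i j))
    _ ≤ ∑' i : ℕ, ENNReal.ofReal (((w:ℝ) + 1 + i) ^ (1-(p-2)) / ((p-2) - 1)) := by
        apply ENNReal.tsum_le_tsum
        intro i
        exact tail_sum (by linarith) (by have := Nat.cast_nonneg (α := ℝ) i; linarith)
    _ = ∑' i : ℕ, (ENNReal.ofReal (1/(p-3)) * ENNReal.ofReal (((w:ℝ) + 1 + i) ^ (-(p-3)))) := by
        apply tsum_congr; intro i
        have h3 : (0:ℝ) < p - 3 := by linarith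
        rw [← ENNReal.ofReal_mul (by positivity)]
        congr 1
        rw [show (1:ℝ)-(p-2) = -(p-3) from by ring, show (p-2)-1 = p-3 from by ring]
        ring
    _ = ENNReal.ofReal (1/(p-3)) * ∑' i : ℕ, ENNReal.ofReal (((w:ℝ) + 1 + i) ^ (-(p-3))) :=
        ENNReal.tsum_mul_left
    _ ≤ ENNReal.ofReal (1/(p-3)) * ENNReal.ofReal ((w:ℝ) ^ (1-(p-3)) / ((p-3) - 1)) := by
        apply mul_le_mul_right (tail_sum (by linarith) hw1)
    _ = ENNReal.ofReal ((w:ℝ) ^ (4 - p) / ((p - 3) * (p - 4))) := by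
        have h3 : (0:ℝ) < p - 3 := by linarith
        have h4 : (0:ℝ) < p - 4 := by linarith
        rw [← ENNReal.ofReal_mul (by positivity)]
        congr 1
        rw [show (1:ℝ)-(p-3) = 4-p from by ring, show (p-3)-1 = p-4 from by ring]
        field_simp

private lemma norm_le {p : ℝ} (hp : 0 < p) {A B : ℝ} (ha : 1 ≤ A) (hb : 1 ≤ B) :
    4 / Real.sqrt (A^2 + B^2) ^ p ≤ 4 * 2^(p/2) * ((A+B) ^ (-p)) := by
  have hAB : (0:ℝ) < A + B := by linarith
  have hs2 : (0:ℝ) < Real.sqrt 2 := Real.sqrt_pos.mpr (by norm_num)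
  have key : (A+B)/Real.sqrt 2 ≤ Real.sqrt (A^2+B^2) := by
    have h1 : Real.sqrt ((A+B)^2/2) ≤ Real.sqrt (A^2+B^2) :=
      Real.sqrt_le_sqrt (by nlinarith [sq_nonneg (A-B)])
    have h2 : Real.sqrt ((A+B)^2/2) = (A+B)/Real.sqrt 2 := by
      rw [Real.sqrt_div (by positivity) 2, Real.sqrt_sq (by linarith)]
    linarith
  have hsq : (0:ℝ) < Real.sqrt (A^2+B^2) := by
    apply Real.sqrt_pos.mpr; nlinarith
  have hpow : ((A+B)/Real.sqrt 2) ^ p ≤ Real.sqrt (A^2+B^2) ^ p :=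
    Real.rpow_le_rpow (by positivity) key (le_of_lt hp)
  have heq : ((A+B)/Real.sqrt 2) ^ p = (A+B)^p / 2^(p/2) := by
    rw [Real.div_rpow (by linarith) (le_of_lt hs2)]
    congr 1
    rw [Real.sqrt_eq_rpow, ← Real.rpow_mul (by norm_num)]
    congr 1
    ring
  have hden : (0:ℝ) < (A+B)^p / 2^(p/2) := by
    apply div_pos (Real.rpow_pos_of_pos hAB p) (Real.rpow_pos_of_pos (by norm_num) _)
  have h4 : 4 / Real.sqrt (A^2+B^2) ^ p ≤ 4 / ((A+B)^p / 2^(p/2)) := by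
    apply div_le_div_of_nonneg_left (by norm_num) hden
    rw [← heq]; exact hpow
  calc 4 / Real.sqrt (A^2 + B^2) ^ p ≤ 4 / ((A+B)^p / 2^(p/2)) := h4
    _ = 4 * 2^(p/2) * ((A+B) ^ (-p)) := by
        rw [Real.rpow_neg (by linarith)]
        field_simp

private def emb (w₁ w₂ h : ℤ) (z : (ℤ × ℤ) × (ℤ × ℤ)) : Bool × (ℕ × ℕ × ℕ × ℕ) :=
  if z.2.1 < -w₁ - h then
    (true, ((z.1.1 - z.2.1 - (w₁+1)).toNat, (z.1.1 + h).toNat,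
            (z.1.2 - z.2.2 - 1).toNat, (-z.2.2).toNat))
  else
    (false, ((z.2.1 - z.1.1 - (w₂+1)).toNat, (-1 - z.1.1).toNat,
             (z.1.2 - z.2.2 - 1).toNat, (-z.2.2).toNat))

private noncomputable def gfun (p : ℝ) (w : ℕ) (t : ℕ × ℕ × ℕ × ℕ) : ℝ≥0∞ :=
  if t.2.1 ≤ t.1 ∧ t.2.2.2 ≤ t.2.2.1 then
    ENNReal.ofReal (4 * 2^(p/2)) * ENNReal.ofReal (((w:ℝ) + 2 + t.1 + t.2.2.1) ^ (-p))
  else 0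

private lemma gfun_sum (p : ℝ) (hp : 6 < p) (w : ℕ) (hw : 1 ≤ w) :
    ∑' t : ℕ × ℕ × ℕ × ℕ, gfun p w t
      ≤ ENNReal.ofReal ((4 * 2^(p/2) / ((p-3)*(p-4))) * (w:ℝ) ^ (4-p)) := by
  have hK : (0:ℝ) ≤ 4 * 2^(p/2) := by positivity
  have hre : ∀ t : ℕ × ℕ × ℕ × ℕ, gfun p w t = ENNReal.ofReal (4 * 2^(p/2)) *
      (if t.2.1 ≤ t.1 ∧ t.2.2.2 ≤ t.2.2.1 then
        ENNReal.ofReal (((w:ℝ) + 2 + t.1 + t.2.2.1) ^ (-p)) else 0) := by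
    intro t
    rw [gfun]
    split <;> simp
  rw [tsum_congr hre, ENNReal.tsum_mul_left]
  calc ENNReal.ofReal (4 * 2^(p/2)) * ∑' t : ℕ × ℕ × ℕ × ℕ,
        (if t.2.1 ≤ t.1 ∧ t.2.2.2 ≤ t.2.2.1 then
          ENNReal.ofReal (((w:ℝ) + 2 + t.1 + t.2.2.1) ^ (-p)) else 0)
      ≤ ENNReal.ofReal (4 * 2^(p/2)) * ENNReal.ofReal ((w:ℝ) ^ (4 - p) / ((p - 3) * (p - 4))) :=
        mul_le_mul_right (quad_sum p hp w hw) _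
    _ = ENNReal.ofReal ((4 * 2^(p/2) / ((p-3)*(p-4))) * (w:ℝ) ^ (4-p)) := by
        rw [← ENNReal.ofReal_mul hK]
        congr 1
        ring

/-- for `p > 6`, the interaction
`f(w₁,h,w₂) = (1/2) W(L⁺_h, Q_{w₁,h,w₂})` between the half-strip
`L⁺_h = {(x,y) : -h ≤ x < 0, y > 0}` and the two quarter-spaces
`Q_{w₁,h,w₂} = {(x,y) : (x < -w₁-h or x ≥ w₂), y ≤ 0}`, where
`W(A,B) = 4 Σ_{x∈A} Σ_{y∈B} |x-y|^{-p}`, satisfies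
`f(w₁,h,w₂) ≤ C₂(w₁^{4-p} + w₂^{4-p})` for a constant `C₂` depending only on `p`,
uniformly in `h`. -/
theorem halfstrip_quarterplane_interaction_bound (p : ℝ) (hp : 6 < p) :
    ∃ C₂ : ℝ, 0 < C₂ ∧ ∀ w₁ w₂ h : ℕ, 1 ≤ w₁ → 1 ≤ w₂ → 1 ≤ h →
      (1 / 2) * ∑' q : ({x : ℤ × ℤ | -(h : ℤ) ≤ x.1 ∧ x.1 < 0 ∧ 0 < x.2} : Set (ℤ × ℤ)) ×
          ({x : ℤ × ℤ | (x.1 < -(w₁ : ℤ) - (h : ℤ) ∨ (w₂ : ℤ) ≤ x.1) ∧ x.2 ≤ 0} : Set (ℤ × ℤ)),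
          4 / zNorm ((q.1 : ℤ × ℤ) - (q.2 : ℤ × ℤ)) ^ p
        ≤ C₂ * ((w₁ : ℝ) ^ ((4 : ℝ) - p) + (w₂ : ℝ) ^ ((4 : ℝ) - p)) := by
  have h3 : (0:ℝ) < p - 3 := by linarith
  have h4 : (0:ℝ) < p - 4 := by linarith
  have hp0 : (0:ℝ) < p := by linarith
  set C : ℝ := 4 * 2^(p/2) / ((p-3)*(p-4)) with hC
  have hCpos : 0 < C := by rw [hC]; positivity
  refine ⟨C, hCpos, ?_⟩
  intro w₁ w₂ h hw₁ hw₂ hh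
  set A : Set (ℤ × ℤ) := {x : ℤ × ℤ | -(h : ℤ) ≤ x.1 ∧ x.1 < 0 ∧ 0 < x.2} with hA
  set B : Set (ℤ × ℤ) := {x : ℤ × ℤ | (x.1 < -(w₁ : ℤ) - (h : ℤ) ∨ (w₂ : ℤ) ≤ x.1) ∧ x.2 ≤ 0}
    with hB
  set F : ↥A × ↥B → ℝ := fun q => 4 / zNorm ((q.1 : ℤ × ℤ) - (q.2 : ℤ × ℤ)) ^ p with hF
  have hF0 : ∀ q, 0 ≤ F q := by
    intro q
    rw [hF]
    have : 0 ≤ zNorm ((q.1 : ℤ × ℤ) - (q.2 : ℤ × ℤ)) := Real.sqrt_nonneg _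
    positivity
  set ee : ↥A × ↥B → Bool × (ℕ × ℕ × ℕ × ℕ) :=
    fun q => emb (w₁:ℤ) (w₂:ℤ) (h:ℤ) ((q.1 : ℤ × ℤ), (q.2 : ℤ × ℤ)) with hee
  set gg : Bool × (ℕ × ℕ × ℕ × ℕ) → ℝ≥0∞ :=
    fun z => if z.1 = true then gfun p w₁ z.2 else gfun p w₂ z.2 with hgg
  -- injectivity
  have hinj : Function.Injective ee := by
    rintro ⟨⟨⟨x1, y1⟩, hq1⟩, ⟨⟨x2, y2⟩, hq2⟩⟩ ⟨⟨⟨x1', y1'⟩, hq1'⟩, ⟨⟨x2', y2'⟩, hq2'⟩⟩ heq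
    simp only [hA, Set.mem_setOf_eq] at hq1 hq1'
    simp only [hB, Set.mem_setOf_eq] at hq2 hq2'
    obtain ⟨ha1, ha2, ha3⟩ := hq1
    obtain ⟨ha1', ha2', ha3'⟩ := hq1'
    obtain ⟨hb1, hb2⟩ := hq2
    obtain ⟨hb1', hb2'⟩ := hq2'
    simp only [hee, emb] at heq
    by_cases hc : x2 < -(w₁:ℤ) - h <;> by_cases hc' : x2' < -(w₁:ℤ) - h
    · rw [if_pos hc, if_pos hc'] at heq
      simp only [Prod.mk.injEq] at heq
      obtain ⟨-, e1, e2, e3, e4⟩ := heq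
      have hx2 : x2 < -(w₁:ℤ) - h := hc
      have hx2' : x2' < -(w₁:ℤ) - h := hc'
      simp only [Prod.mk.injEq, Subtype.mk.injEq]
      omega
    · rw [if_pos hc, if_neg hc'] at heq
      simp only [Prod.mk.injEq] at heq
      exact absurd heq.1 (by simp)
    · rw [if_neg hc, if_pos hc'] at heq
      simp only [Prod.mk.injEq] at heq
      exact absurd heq.1 (by simp)
    · rw [if_neg hc, if_neg hc'] at heq
      simp only [Prod.mk.injEq] at heq
      obtain ⟨-, e1, e2, e3, e4⟩ := heq
      simp only [Prod.mk.injEq, Subtype.mk.injEq]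
      omega
  -- pointwise bound
  have hle : ∀ q : ↥A × ↥B, ENNReal.ofReal (F q) ≤ gg (ee q) := by
    rintro ⟨⟨⟨x1, y1⟩, hq1⟩, ⟨⟨x2, y2⟩, hq2⟩⟩
    simp only [hA, Set.mem_setOf_eq] at hq1
    simp only [hB, Set.mem_setOf_eq] at hq2
    obtain ⟨ha1, ha2, ha3⟩ := hq1
    obtain ⟨hb1, hb2⟩ := hq2
    have hFval : F (⟨(x1, y1), by rw [hA]; exact ⟨ha1, ha2, ha3⟩⟩,
        ⟨(x2, y2), by rw [hB]; exact ⟨hb1, hb2⟩⟩)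
        = 4 / Real.sqrt (((x1 - x2 : ℤ) : ℝ)^2 + ((y1 - y2 : ℤ) : ℝ)^2) ^ p := by
      rw [hF]
      simp [zNorm, Prod.fst_sub, Prod.snd_sub]
    rw [hFval]
    have hby : (1:ℤ) ≤ y1 - y2 := by omega
    have hbyR : (1:ℝ) ≤ ((y1 - y2 : ℤ) : ℝ) := by exact_mod_cast hby
    simp only [hee, emb, hgg]
    by_cases hc : x2 < -(w₁:ℤ) - h
    · rw [if_pos hc]
      dsimp only
      rw [if_pos rfl]
      have hax : (1:ℤ) ≤ x1 - x2 := by omega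
      have haxR : (1:ℝ) ≤ ((x1 - x2 : ℤ) : ℝ) := by exact_mod_cast hax
      rw [gfun, if_pos (⟨(by omega : (x1+(h:ℤ)).toNat ≤ (x1 - x2 - ((w₁:ℤ)+1)).toNat),
        (by omega : ((-y2).toNat ≤ (y1-y2-1).toNat))⟩ :
        ((x1 - x2 - ((w₁:ℤ)+1)).toNat, (x1+(h:ℤ)).toNat, (y1-y2-1).toNat, (-y2).toNat).2.1 ≤
          ((x1 - x2 - ((w₁:ℤ)+1)).toNat, (x1+(h:ℤ)).toNat, (y1-y2-1).toNat, (-y2).toNat).1 ∧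
        ((x1 - x2 - ((w₁:ℤ)+1)).toNat, (x1+(h:ℤ)).toNat, (y1-y2-1).toNat, (-y2).toNat).2.2.2 ≤
          ((x1 - x2 - ((w₁:ℤ)+1)).toNat, (x1+(h:ℤ)).toNat, (y1-y2-1).toNat, (-y2).toNat).2.2.1)]
      dsimp only
      have hbase : ((w₁:ℝ) + 2 + ((x1 - x2 - ((w₁:ℤ)+1)).toNat : ℕ) + ((y1 - y2 - 1).toNat : ℕ))
          = ((x1 - x2 : ℤ) : ℝ) + ((y1 - y2 : ℤ) : ℝ) := by
        have : ((w₁:ℤ) + 2 + (x1 - x2 - ((w₁:ℤ)+1)).toNat + (y1 - y2 - 1).toNat : ℤ)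
            = (x1 - x2) + (y1 - y2) := by omega
        exact_mod_cast congrArg (fun z : ℤ => (z : ℝ)) this
      rw [hbase, ← ENNReal.ofReal_mul (by positivity)]
      exact ENNReal.ofReal_le_ofReal (norm_le hp0 haxR hbyR)
    · rw [if_neg hc]
      dsimp only
      rw [if_neg (by simp)]
      have hw2x : (w₂:ℤ) ≤ x2 := by
        rcases hb1 with h' | h'
        · omega
        · exact h'
      have hax : (1:ℤ) ≤ x2 - x1 := by omega
      have haxR : (1:ℝ) ≤ ((x2 - x1 : ℤ) : ℝ) := by exact_mod_cast hax
      rw [gfun, if_pos (⟨(by omega : ((-1-x1).toNat ≤ (x2 - x1 - ((w₂:ℤ)+1)).toNat)),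
        (by omega : ((-y2).toNat ≤ (y1-y2-1).toNat))⟩ :
        ((x2 - x1 - ((w₂:ℤ)+1)).toNat, (-1-x1).toNat, (y1-y2-1).toNat, (-y2).toNat).2.1 ≤
          ((x2 - x1 - ((w₂:ℤ)+1)).toNat, (-1-x1).toNat, (y1-y2-1).toNat, (-y2).toNat).1 ∧
        ((x2 - x1 - ((w₂:ℤ)+1)).toNat, (-1-x1).toNat, (y1-y2-1).toNat, (-y2).toNat).2.2.2 ≤
          ((x2 - x1 - ((w₂:ℤ)+1)).toNat, (-1-x1).toNat, (y1-y2-1).toNat, (-y2).toNat).2.2.1)]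
      dsimp only
      have hbase : ((w₂:ℝ) + 2 + ((x2 - x1 - ((w₂:ℤ)+1)).toNat : ℕ) + ((y1 - y2 - 1).toNat : ℕ))
          = ((x2 - x1 : ℤ) : ℝ) + ((y1 - y2 : ℤ) : ℝ) := by
        have : ((w₂:ℤ) + 2 + (x2 - x1 - ((w₂:ℤ)+1)).toNat + (y1 - y2 - 1).toNat : ℤ)
            = (x2 - x1) + (y1 - y2) := by omega
        exact_mod_cast congrArg (fun z : ℤ => (z : ℝ)) this
      rw [hbase, ← ENNReal.ofReal_mul (by positivity)]
      have hsq : (((x1 - x2 : ℤ) : ℝ))^2 = (((x2 - x1 : ℤ) : ℝ))^2 := by push_cast; ring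
      rw [hsq]
      exact ENNReal.ofReal_le_ofReal (norm_le hp0 haxR hbyR)
  -- main ENNReal bound
  have hmain : ∑' q : ↥A × ↥B, ENNReal.ofReal (F q)
      ≤ ENNReal.ofReal (C * ((w₁ : ℝ) ^ ((4:ℝ) - p) + (w₂ : ℝ) ^ ((4:ℝ) - p))) := by
    have hb := Summable.tsum_le_tsum_of_inj ee hinj (fun c _ => zero_le) hle
      ENNReal.summable ENNReal.summable
    refine le_trans hb ?_
    have hsplit : ∑' z : Bool × (ℕ × ℕ × ℕ × ℕ), gg z
        = (∑' t : ℕ × ℕ × ℕ × ℕ, gfun p w₂ t) + ∑' t : ℕ × ℕ × ℕ × ℕ, gfun p w₁ t := by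
      rw [ENNReal.tsum_prod']
      rw [tsum_bool]
      simp [hgg]
    rw [hsplit]
    calc (∑' t : ℕ × ℕ × ℕ × ℕ, gfun p w₂ t) + ∑' t : ℕ × ℕ × ℕ × ℕ, gfun p w₁ t
        ≤ ENNReal.ofReal (C * (w₂:ℝ) ^ (4-p)) + ENNReal.ofReal (C * (w₁:ℝ) ^ (4-p)) :=
          add_le_add (gfun_sum p hp w₂ hw₂) (gfun_sum p hp w₁ hw₁)
      _ = ENNReal.ofReal (C * ((w₁ : ℝ) ^ ((4:ℝ) - p) + (w₂ : ℝ) ^ ((4:ℝ) - p))) := by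
          rw [← ENNReal.ofReal_add (by positivity) (by positivity)]
          congr 1
          ring
  -- convert to reals
  have hTeq : ∑' q : ↥A × ↥B, F q = (∑' q : ↥A × ↥B, ENNReal.ofReal (F q)).toReal := by
    rw [ENNReal.tsum_toReal_eq (fun q => ENNReal.ofReal_ne_top)]
    exact tsum_congr fun q => (ENNReal.toReal_ofReal (hF0 q)).symm
  have hT : ∑' q : ↥A × ↥B, F q ≤ C * ((w₁ : ℝ) ^ ((4:ℝ) - p) + (w₂ : ℝ) ^ ((4:ℝ) - p)) := by
    rw [hTeq]
    calc (∑' q : ↥A × ↥B, ENNReal.ofReal (F q)).toReal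
        ≤ (ENNReal.ofReal (C * ((w₁ : ℝ) ^ ((4:ℝ) - p) + (w₂ : ℝ) ^ ((4:ℝ) - p)))).toReal :=
          ENNReal.toReal_mono ENNReal.ofReal_ne_top hmain
      _ = C * ((w₁ : ℝ) ^ ((4:ℝ) - p) + (w₂ : ℝ) ^ ((4:ℝ) - p)) :=
          ENNReal.toReal_ofReal (by positivity)
  have hT0 : 0 ≤ ∑' q : ↥A × ↥B, F q := tsum_nonneg hF0
  linarith
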